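/- (Stone's theorem, finite dimensions) For each n ∈ ℕ there is a one-to-one correspondence between continuous one-parameter unitary groups of n×n complex matrices and Hermitian n×n complex matrices: (i) if U : ℝ → Matrix (Fin n) (Fin n) ℂ is continuous, U(0) = 1, U(θ)·U(θ') = U(θ + θ') for all θ, θ', and U(θ) is unitary for every θ, then there exists a unique Hermitian matrix H with U(θ) = Matrix.exp(ℂ, (I·θ) • H) for all θ ∈ ℝ (and H = −i·U'(0)); (ii) conversely, for every Hermitian H the map θ ↦ Matrix.exp(ℂ, (I·θ) • H) is a continuous one-parameter unitary group. -/

import Mathlib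

open scoped Matrix

attribute [local instance] Matrix.linftyOpNormedRing Matrix.linftyOpNormedAlgebra

attribute [-instance] instTopologicalSpaceMatrix Matrix.instUniformSpace in
open NormedSpace Filter Topology MeasureTheory intervalIntegral in
theorem stone_forward (n : ℕ) (U : ℝ → Matrix (Fin n) (Fin n) ℂ)
    (hcont : Continuous U) (h0 : U 0 = 1)
    (hmul : ∀ θ θ' : ℝ, U θ * U θ' = U (θ + θ'))
    (hunit : ∀ θ : ℝ, U θ ∈ Matrix.unitaryGroup (Fin n) ℂ) :
    ∃ A : Matrix (Fin n) (Fin n) ℂ, Aᴴ = -A ∧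
      (∀ θ : ℝ, U θ = NormedSpace.exp (θ • A)) ∧
      Tendsto (slope U 0) (𝓝[≠] (0:ℝ)) (𝓝 A) := by
  -- choose ε with ‖1 - U s‖ ≤ 1/2 for s ∈ (0, ε]
  obtain ⟨ε, hε, hsmall⟩ : ∃ ε > (0:ℝ), ∀ s ∈ Set.Ioc (0:ℝ) ε,
      ‖(1 : Matrix (Fin n) (Fin n) ℂ) - U s‖ ≤ 1/2 := by
    have h1 : Tendsto U (𝓝 0) (𝓝 (1 : Matrix (Fin n) (Fin n) ℂ)) := by
      simpa [h0] using hcont.tendsto 0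
    rw [Metric.tendsto_nhds] at h1
    obtain ⟨δ, hδ, hball⟩ := Metric.eventually_nhds_iff.mp (h1 (1/2) (by norm_num))
    refine ⟨δ/2, by positivity, fun s hs => ?_⟩
    have hd : dist (U s) 1 < 1/2 := by
      apply hball
      rw [Real.dist_eq, sub_zero, abs_of_pos hs.1]
      linarith [hs.2]
    rw [dist_eq_norm] at hd
    rw [← norm_neg]
    simp only [neg_sub]
    linarith
  set V : Matrix (Fin n) (Fin n) ℂ := ∫ s in (0:ℝ)..ε, U s with hV
  have hUi : ∀ a b : ℝ, IntervalIntegrable U volume a b := fun a b =>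
    hcont.intervalIntegrable a b
  have hVnorm : ‖(ε:ℝ) • (1:Matrix (Fin n) (Fin n) ℂ) - V‖ ≤ ε/2 := by
    have he : (ε:ℝ) • (1:Matrix (Fin n) (Fin n) ℂ) - V
        = ∫ s in (0:ℝ)..ε, ((1:Matrix (Fin n) (Fin n) ℂ) - U s) := by
      rw [intervalIntegral.integral_sub intervalIntegrable_const (hUi 0 ε),
        intervalIntegral.integral_const]
      simp [hV]
    rw [he]
    have hb := intervalIntegral.norm_integral_le_of_norm_le_const
      (C := 1/2) (f := fun s => (1:Matrix (Fin n) (Fin n) ℂ) - U s) (a := 0) (b := ε) ?_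
    · calc ‖∫ s in (0:ℝ)..ε, ((1:Matrix (Fin n) (Fin n) ℂ) - U s)‖ ≤ 1/2 * |ε - 0| := hb
        _ = ε/2 := by rw [sub_zero, abs_of_pos hε]; ring
    · intro s hs
      rw [Set.uIoc_of_le hε.le] at hs
      exact hsmall s hs
  -- V is a unit
  have hx : ‖(1:Matrix (Fin n) (Fin n) ℂ) - ε⁻¹ • V‖ < 1 := by
    have h1 : (1:Matrix (Fin n) (Fin n) ℂ) - ε⁻¹ • V
        = ε⁻¹ • ((ε:ℝ) • (1:Matrix (Fin n) (Fin n) ℂ) - V) := by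
      rw [smul_sub, smul_smul, inv_mul_cancel₀ hε.ne', one_smul]
    rw [h1, norm_smul, Real.norm_eq_abs, abs_of_pos (by positivity : (0:ℝ) < ε⁻¹)]
    calc ε⁻¹ * ‖(ε:ℝ) • (1:Matrix (Fin n) (Fin n) ℂ) - V‖ ≤ ε⁻¹ * (ε/2) :=
          mul_le_mul_of_nonneg_left hVnorm (by positivity)
      _ = 1/2 := by field_simp
      _ < 1 := by norm_num
  have hVunit : IsUnit V := by
    have hmul21 : ((ε:ℝ) • (1:Matrix (Fin n) (Fin n) ℂ)) * (ε⁻¹ • (1:Matrix (Fin n) (Fin n) ℂ)) = 1 := by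
      rw [smul_mul_smul_comm, one_mul, mul_inv_cancel₀ hε.ne', one_smul]
    have hmul22 : (ε⁻¹ • (1:Matrix (Fin n) (Fin n) ℂ)) * ((ε:ℝ) • (1:Matrix (Fin n) (Fin n) ℂ)) = 1 := by
      rw [smul_mul_smul_comm, one_mul, inv_mul_cancel₀ hε.ne', one_smul]
    have h2 : IsUnit ((ε:ℝ) • (1:Matrix (Fin n) (Fin n) ℂ)) :=
      ⟨⟨_, _, hmul21, hmul22⟩, rfl⟩
    have h3 : IsUnit ((1:Matrix (Fin n) (Fin n) ℂ) - ((1:Matrix (Fin n) (Fin n) ℂ) - ε⁻¹ • V)) :=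
      (Units.oneSub _ hx).isUnit
    have h4 : V = ((ε:ℝ) • (1:Matrix (Fin n) (Fin n) ℂ))
        * ((1:Matrix (Fin n) (Fin n) ℂ) - ((1:Matrix (Fin n) (Fin n) ℂ) - ε⁻¹ • V)) := by
      rw [sub_sub_cancel, smul_mul_assoc, one_mul, smul_smul, mul_inv_cancel₀ hε.ne', one_smul]
    rw [h4]; exact h2.mul h3
  obtain ⟨w, hw⟩ := hVunit
  -- the key identity : U t * V = F (t+ε) - F t  where F t = ∫ 0..t U
  set F : ℝ → Matrix (Fin n) (Fin n) ℂ := fun t => ∫ s in (0:ℝ)..t, U s with hF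
  have hkey : ∀ t : ℝ, U t * V = F (t + ε) - F t := by
    intro t
    have h5 : F (t + ε) - F t = ∫ s in t..(t+ε), U s := by
      show (∫ s in (0:ℝ)..(t+ε), U s) - (∫ s in (0:ℝ)..t, U s) = _
      rw [← intervalIntegral.integral_add_adjacent_intervals (hUi 0 t) (hUi t (t+ε))]
      abel
    have h6 : (∫ s in t..(t+ε), U s) = ∫ s in (0:ℝ)..ε, U (t + s) := by
      rw [intervalIntegral.integral_comp_add_left (fun s => U s) t]
      norm_num
    have h7 : (∫ s in (0:ℝ)..ε, U (t + s)) = ∫ s in (0:ℝ)..ε, U t * U s := by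
      congr 1; ext s; rw [hmul]
    have h8 : (∫ s in (0:ℝ)..ε, U t * U s) = U t * V := by
      rw [hV]
      have := (ContinuousLinearMap.mul ℂ (Matrix (Fin n) (Fin n) ℂ) (U t)).intervalIntegral_comp_comm (hUi 0 ε)
      simpa using this
    rw [h5, h6, h7, h8]
  -- derivative of F
  have hFd : ∀ t : ℝ, HasDerivAt F (U t) t := fun t =>
    intervalIntegral.integral_hasDerivAt_right (hUi 0 t)
      hcont.aestronglyMeasurable.stronglyMeasurableAtFilter hcont.continuousAt
  -- U is differentiable with U' t = U t * A
  set A : Matrix (Fin n) (Fin n) ℂ := (U ε - 1) * (↑(w⁻¹) : Matrix (Fin n) (Fin n) ℂ) with hA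
  have hUd : ∀ t : ℝ, HasDerivAt U (U t * A) t := by
    intro t
    have hd1 : HasDerivAt (fun t : ℝ => F (t + ε)) (U (t + ε)) t :=
      (hFd (t + ε)).comp_add_const t ε
    have hd2 := (hd1.sub (hFd t)).mul_const (↑(w⁻¹) : Matrix (Fin n) (Fin n) ℂ)
    have h10 : (U (t + ε) - U t) * (↑(w⁻¹) : Matrix (Fin n) (Fin n) ℂ) = U t * A := by
      rw [← hmul t ε, hA,
        show U t * U ε - U t = U t * (U ε - 1) by rw [mul_sub, mul_one], mul_assoc]
    rw [h10] at hd2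
    exact hd2.congr_of_eventuallyEq (Filter.Eventually.of_forall fun y => by
      show U y = (F (y + ε) - F y) * (↑(w⁻¹) : Matrix (Fin n) (Fin n) ℂ)
      rw [← hkey y, ← hw, mul_assoc, Units.mul_inv, mul_one])
  -- derivative of the exponential
  have hexp : ∀ (B : Matrix (Fin n) (Fin n) ℂ) (t : ℝ),
      HasDerivAt (fun u : ℝ => exp (u • B)) (exp (t • B) * B) t := by
    intro B t
    have h1 := hasDerivAt_exp_smul_const (𝕂 := ℝ) B t
    exact h1
  have hcomm : ∀ t : ℝ, Commute A (exp (t • (-A))) := fun t =>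
    (((Commute.refl A).neg_right).smul_right t).exp_right
  have hg : ∀ t : ℝ, HasDerivAt (fun u : ℝ => U u * exp (u • (-A))) 0 t := by
    intro t
    have h1 := (hUd t).mul (hexp (-A) t)
    have h2 : U t * A * exp (t • (-A)) + U t * (exp (t • (-A)) * -A) = 0 := by
      simp only [mul_neg, ← (hcomm t).eq, ← mul_assoc]
      exact add_neg_cancel _
    rwa [h2] at h1
  have hconst : ∀ t : ℝ, U t * exp (t • (-A)) = 1 := by
    intro t
    have hc := is_const_of_deriv_eq_zero (𝕜 := ℝ)
      (f := fun u : ℝ => U u * exp (u • (-A)))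
      (fun x => (hg x).differentiableAt) (fun x => (hg x).deriv) t 0
    simpa [h0, zero_smul, exp_zero] using hc
  have hformula : ∀ θ : ℝ, U θ = exp (θ • A) := by
    intro θ
    have hc2 : Commute (θ • (-A)) (θ • A) :=
      (((Commute.refl A).neg_left).smul_left θ).smul_right θ
    have h3 : exp (θ • (-A)) * exp (θ • A) = 1 := by
      rw [← exp_add_of_commute hc2]
      simp [← smul_add]
    calc U θ = U θ * (exp (θ • (-A)) * exp (θ • A)) := by rw [h3, mul_one]
      _ = (U θ * exp (θ • (-A))) * exp (θ • A) := by rw [mul_assoc]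
      _ = exp (θ • A) := by rw [hconst θ, one_mul]
  have hstar : ∀ θ : ℝ, (U θ)ᴴ = U (-θ) := by
    intro θ
    have h1 : (U θ)ᴴ * U θ = 1 := by
      have h2 := Matrix.mem_unitaryGroup_iff'.mp (hunit θ)
      simpa [Matrix.star_eq_conjTranspose] using h2
    have h2 : U θ * U (-θ) = 1 := by rw [hmul]; simp [h0]
    calc (U θ)ᴴ = (U θ)ᴴ * (U θ * U (-θ)) := by rw [h2, mul_one]
      _ = ((U θ)ᴴ * U θ) * U (-θ) := by rw [← mul_assoc]
      _ = U (-θ) := by rw [h1, one_mul]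
  have hskew : Aᴴ = -A := by
    have h1 : ∀ t : ℝ, exp (t • Aᴴ) = exp (t • (-A)) := by
      intro t
      have h2 := hstar t
      rw [hformula t, hformula (-t)] at h2
      erw [← Matrix.exp_conjTranspose] at h2
      have h3 : (t • A)ᴴ = t • Aᴴ := by
        simp [Matrix.conjTranspose_smul]
      rw [h3] at h2
      erw [h2, neg_smul, ← smul_neg]
    have hL := hexp Aᴴ 0
    have hR := hexp (-A) 0
    rw [funext h1] at hL
    have h4 := hL.unique hR
    simpa using h4
  refine ⟨A, hskew, hformula, ?_⟩
  have hd0 : HasDerivAt U A 0 := by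
    have h4 := hUd 0
    rwa [h0, one_mul] at h4
  exact hasDerivAt_iff_tendsto_slope.mp hd0

attribute [-instance] instTopologicalSpaceMatrix Matrix.instUniformSpace in
theorem stone_exp_continuous (n : ℕ) (H : Matrix (Fin n) (Fin n) ℂ) :
    Continuous (fun θ : ℝ => NormedSpace.exp ((Complex.I * (θ : ℂ)) • H)) := by
  exact NormedSpace.exp_continuous.comp
    ((continuous_const.mul Complex.continuous_ofReal).smul continuous_const)

attribute [local instance] Matrix.normedAddCommGroup Matrix.normedSpace

/-- Stone's theorem in finite dimensions: continuous one-parameter unitary groups of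
`n×n` complex matrices correspond exactly to Hermitian `n×n` matrices.  (i) Every
continuous one-parameter unitary group `U` is of the form `U(θ) = exp((I·θ) • H)` for a
unique Hermitian `H` (with `H = −i·U'(0)`, i.e. `U'(0) = I • H`); (ii) conversely for every
Hermitian `H` the map `θ ↦ exp((I·θ) • H)` is a continuous one-parameter unitary group. -/
theorem stmt_15 (n : ℕ) :
    (∀ U : ℝ → Matrix (Fin n) (Fin n) ℂ,
      Continuous U → U 0 = 1 → (∀ θ θ' : ℝ, U θ * U θ' = U (θ + θ')) →
      (∀ θ : ℝ, U θ ∈ Matrix.unitaryGroup (Fin n) ℂ) →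
      ∃! H : Matrix (Fin n) (Fin n) ℂ, H.conjTranspose = H ∧
        (∀ θ : ℝ, U θ = NormedSpace.exp ((Complex.I * (θ : ℂ)) • H)) ∧
        HasDerivAt U (Complex.I • H) 0) ∧
    (∀ H : Matrix (Fin n) (Fin n) ℂ, H.conjTranspose = H →
      Continuous (fun θ : ℝ => NormedSpace.exp ((Complex.I * (θ : ℂ)) • H)) ∧
      NormedSpace.exp ((Complex.I * ((0 : ℝ) : ℂ)) • H) = 1 ∧
      (∀ θ θ' : ℝ,
        NormedSpace.exp ((Complex.I * (θ : ℂ)) • H) *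
            NormedSpace.exp ((Complex.I * (θ' : ℂ)) • H) =
          NormedSpace.exp ((Complex.I * ((θ + θ' : ℝ) : ℂ)) • H)) ∧
      (∀ θ : ℝ,
        NormedSpace.exp ((Complex.I * (θ : ℂ)) • H) ∈ Matrix.unitaryGroup (Fin n) ℂ)) := by
  constructor
  · intro U hcont h0 hmul hunit
    obtain ⟨A, hskew, hformula, hslope⟩ := stone_forward n U hcont h0 hmul hunit
    refine ⟨(-Complex.I) • A, ⟨?_, ?_, ?_⟩, ?_⟩
    · -- Hermitian
      rw [Matrix.conjTranspose_smul, hskew, star_neg, Complex.star_def, Complex.conj_I,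
        neg_neg, smul_neg, ← neg_smul]
    · -- formula
      intro θ
      rw [smul_smul,
        show Complex.I * (θ : ℂ) * (-Complex.I) = ((θ:ℝ):ℂ) by
          rw [mul_comm Complex.I (θ:ℂ), mul_assoc, mul_neg, Complex.I_mul_I, neg_neg, mul_one],
        show ((θ:ℝ):ℂ) = algebraMap ℝ ℂ θ from rfl, algebraMap_smul]
      exact hformula θ
    · -- derivative
      rw [smul_smul, show Complex.I * (-Complex.I) = 1 by
          rw [mul_neg, Complex.I_mul_I, neg_neg], one_smul]
      exact hasDerivAt_iff_tendsto_slope.mpr hslope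
    · -- uniqueness
      rintro H' ⟨-, -, hd'⟩
      have hd : HasDerivAt U (Complex.I • ((-Complex.I) • A)) 0 := by
        rw [smul_smul, show Complex.I * (-Complex.I) = 1 by
            rw [mul_neg, Complex.I_mul_I, neg_neg], one_smul]
        exact hasDerivAt_iff_tendsto_slope.mpr hslope
      have h5 : Complex.I • H' = Complex.I • ((-Complex.I) • A) := hd'.unique hd
      exact smul_right_injective _ Complex.I_ne_zero h5
  · intro H hH
    have hadd : ∀ θ θ' : ℝ,
        NormedSpace.exp ((Complex.I * (θ : ℂ)) • H) *
            NormedSpace.exp ((Complex.I * (θ' : ℂ)) • H) =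
          NormedSpace.exp ((Complex.I * ((θ + θ' : ℝ) : ℂ)) • H) := by
      intro θ θ'
      rw [show (Complex.I * ((θ + θ' : ℝ) : ℂ)) • H
          = (Complex.I * (θ : ℂ)) • H + (Complex.I * (θ' : ℂ)) • H by
        rw [← add_smul, ← mul_add, Complex.ofReal_add]]
      exact (Matrix.exp_add_of_commute _ _
        (((Commute.refl H).smul_left _).smul_right _)).symm
    refine ⟨stone_exp_continuous n H, ?_, hadd, ?_⟩
    · simp only [Complex.ofReal_zero, mul_zero, zero_smul]
      exact NormedSpace.exp_zero
    · intro θ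
      rw [Matrix.mem_unitaryGroup_iff]
      have hc : star (Complex.I * (θ:ℂ)) = -(Complex.I * (θ:ℂ)) := by
        simp [Complex.ext_iff]
      have h2 : star ((Complex.I * (θ:ℂ)) • H) = -((Complex.I * (θ:ℂ)) • H) := by
        rw [star_smul, hc, Matrix.star_eq_conjTranspose, hH, neg_smul]
      rw [NormedSpace.star_exp, h2, ← Matrix.exp_add_of_commute _ _ ((Commute.refl ((Complex.I * (θ:ℂ)) • H)).neg_right),
        add_neg_cancel]
      exact NormedSpace.exp_zero
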